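/- Let T be a reduction operator relative to (G,<). Then the set {g − T(g) : g ∈ G, T(g) ≠ g} is a basis of ker(T). In particular, every v ∈ ker(T) has a unique decomposition v = Σ λ_g (g − T(g)) over T-reducible elements g. -/

import Mathlib

open Finsupp

variable {K G : Type*} [Field K] [LinearOrder G] [WellFoundedLT G]

/-- `T` is a reduction operator relative to `(G, <)`. -/
def IsRedOp (T : (G →₀ K) →ₗ[K] (G →₀ K)) : Prop :=
  T ∘ₗ T = T ∧
    ∀ g : G, T (single g 1) = single g 1 ∨ (T (single g 1)).support.max < (g : WithBot G)

set_option linter.unusedSectionVars false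

lemma max_lt_apply_eq_zero {w : G →₀ K} {g : G} (h : w.support.max < (g : WithBot G))
    {x : G} (hx : g ≤ x) : w x = 0 := by
  by_contra h0
  have hmem : x ∈ w.support := Finsupp.mem_support_iff.2 h0
  have hlt : (x : WithBot G) < (g : WithBot G) := lt_of_le_of_lt (Finset.le_max hmem) h
  exact absurd (WithBot.coe_lt_coe.mp hlt) (not_lt.2 hx)

lemma red_apply_eq_zero (T : (G →₀ K) →ₗ[K] (G →₀ K)) (hT : IsRedOp T) {g : G}
    (hred : T (single g 1) ≠ single g 1) {x : G} (hx : g ≤ x) :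
    T (single g 1) x = 0 := by
  rcases hT.2 g with h | h
  · exact absurd h hred
  · exact max_lt_apply_eq_zero h hx

lemma T_repr (T : (G →₀ K) →ₗ[K] (G →₀ K)) (v : G →₀ K) :
    T v = ∑ h ∈ v.support, v h • T (single h 1) := by
  conv_lhs => rw [← Finsupp.sum_single v, Finsupp.sum]
  rw [map_sum]
  refine Finset.sum_congr rfl fun h _ => ?_
  rw [← map_smul, Finsupp.smul_single', mul_one]

lemma Tv_apply (T : (G →₀ K) →ₗ[K] (G →₀ K)) (hT : IsRedOp T) (v : G →₀ K) (g : G)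
    (hmax : ∀ x ∈ v.support, x ≤ g) (hirr : T (single g 1) = single g 1) :
    T v g = v g := by
  rw [T_repr T v, Finsupp.finset_sum_apply]
  rw [Finset.sum_eq_single g]
  · by_cases hg : g ∈ v.support
    · rw [hirr, Finsupp.smul_apply, Finsupp.single_eq_same, smul_eq_mul, mul_one]
    · rw [Finsupp.notMem_support_iff.mp hg, zero_smul, Finsupp.coe_zero, Pi.zero_apply]
  · intro h hh hne
    have hlt : h < g := lt_of_le_of_ne (hmax h hh) hne
    rcases hT.2 h with hi | hi
    · rw [hi, Finsupp.smul_apply, Finsupp.single_eq_of_ne' hne, smul_zero]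
    · rw [Finsupp.smul_apply, max_lt_apply_eq_zero hi hlt.le, smul_zero]
  · intro hg
    rw [Finsupp.notMem_support_iff.mp hg, zero_smul, Finsupp.coe_zero, Pi.zero_apply]

lemma T_idem_apply (T : (G →₀ K) →ₗ[K] (G →₀ K)) (hT : IsRedOp T) (v : G →₀ K) :
    T (T v) = T v := by
  have := LinearMap.congr_fun hT.1 v
  simpa using this

/-- The family `g - T g`, indexed by the `T`-reducible elements `g`, is a basis of `ker T`:
it is linearly independent and spans `ker T`. -/
theorem kernel_basis (T : (G →₀ K) →ₗ[K] (G →₀ K)) (hT : IsRedOp T) :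
    LinearIndependent K
      (fun g : {g : G // T (single g 1) ≠ single g 1} =>
        single g.1 (1 : K) - T (single g.1 1)) ∧
    Submodule.span K
      (Set.range (fun g : {g : G // T (single g 1) ≠ single g 1} =>
        single g.1 (1 : K) - T (single g.1 1))) = LinearMap.ker T := by
  classical
  set f : {g : G // T (single g 1) ≠ single g 1} → (G →₀ K) :=
    fun g => single g.1 (1 : K) - T (single g.1 1) with hf
  have hfval : ∀ (g : {g : G // T (single g 1) ≠ single g 1}) (x : G), g.1 ≤ x →
      f g x = if x = g.1 then 1 else 0 := by
    intro g x hx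
    rw [hf]
    simp only [Finsupp.sub_apply, red_apply_eq_zero T hT g.2 hx, sub_zero]
    rcases eq_or_ne x g.1 with rfl | hne
    · simp
    · rw [Finsupp.single_eq_of_ne' (Ne.symm hne), if_neg hne]
  constructor
  · rw [linearIndependent_iff']
    intro s c hsum i hi
    by_contra hci
    set t := s.filter (fun j => c j ≠ 0) with ht
    have hne : t.Nonempty := ⟨i, Finset.mem_filter.2 ⟨hi, hci⟩⟩
    obtain ⟨j, hjt, hjmax⟩ := Finset.exists_max_image t (fun j => j.1) hne
    have heval : (∑ k ∈ s, c k • f k) j.1 = c j := by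
      rw [Finsupp.finset_sum_apply, Finset.sum_eq_single j]
      · rw [Finsupp.smul_apply, hfval j j.1 le_rfl, if_pos rfl, smul_eq_mul, mul_one]
      · intro k hk hne'
        by_cases hck : c k = 0
        · rw [hck, zero_smul, Finsupp.coe_zero, Pi.zero_apply]
        · have hkt : k ∈ t := Finset.mem_filter.2 ⟨hk, hck⟩
          have hlt : k.1 < j.1 :=
            lt_of_le_of_ne (hjmax k hkt) (fun h => hne' (Subtype.ext h))
          rw [Finsupp.smul_apply, hfval k j.1 hlt.le, if_neg (ne_of_gt hlt), smul_zero]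
      · intro hj
        exact absurd (Finset.mem_filter.mp hjt).1 hj
    rw [hsum] at heval
    exact (Finset.mem_filter.mp hjt).2 heval.symm
  · set S := Submodule.span K (Set.range f) with hS
    apply le_antisymm
    · rw [Submodule.span_le]
      rintro _ ⟨g, rfl⟩
      rw [SetLike.mem_coe, LinearMap.mem_ker, hf]
      simp only [map_sub, T_idem_apply T hT, sub_self]
    · intro v hv
      rw [LinearMap.mem_ker] at hv
      have key : ∀ m : WithBot G, ∀ v : G →₀ K, v.support.max = m → T v = 0 → v ∈ S := by
        intro m
        induction m using WellFoundedLT.induction with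
        | _ m ih =>
          intro v hm hv0
          rcases eq_or_ne v 0 with rfl | hvne
          · exact Submodule.zero_mem _
          have hsupp : v.support.Nonempty := Finsupp.support_nonempty_iff.2 hvne
          set g := v.support.max' hsupp with hg
          have hmax : ∀ x ∈ v.support, x ≤ g := fun x hx => Finset.le_max' _ x hx
          have hgred : T (single g 1) ≠ single g 1 := by
            intro hirr
            have h1 : T v g = v g := Tv_apply T hT v g hmax hirr
            rw [hv0] at h1
            exact Finsupp.mem_support_iff.1 (v.support.max'_mem hsupp) h1.symm
          set w := v - v g • f ⟨g, hgred⟩ with hw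
          have hwx : ∀ x, g ≤ x → w x = 0 := by
            intro x hx
            rw [hw, Finsupp.sub_apply, Finsupp.smul_apply,
              hfval ⟨g, hgred⟩ x hx, smul_eq_mul]
            rcases eq_or_lt_of_le hx with rfl | hlt
            · rw [if_pos rfl, mul_one, sub_self]
            · rw [if_neg (ne_of_gt hlt), mul_zero, sub_zero]
              exact Finsupp.notMem_support_iff.1 (fun hm' => absurd (hmax x hm') (not_le.2 hlt))
          have hwlt : w.support.max < (g : WithBot G) := by
            rcases w.support.eq_empty_or_nonempty with he | hne
            · rw [he, Finset.max_empty]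
              exact WithBot.bot_lt_coe g
            · rw [← Finset.coe_max' hne, WithBot.coe_lt_coe]
              have hmem := w.support.max'_mem hne
              by_contra hle
              exact Finsupp.mem_support_iff.1 hmem (hwx _ (not_lt.1 hle))
          have hTw : T w = 0 := by
            rw [hw, map_sub, map_smul, hf]
            simp only [map_sub, T_idem_apply T hT, sub_self, smul_zero, sub_zero, hv0]
          have hmg : (g : WithBot G) = m := by
            rw [← hm, hg, Finset.coe_max']
          have hwS : w ∈ S := ih w.support.max (hmg ▸ hwlt) w rfl hTw
          have hfS : f ⟨g, hgred⟩ ∈ S := Submodule.subset_span ⟨⟨g, hgred⟩, rfl⟩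
          have : v = w + v g • f ⟨g, hgred⟩ := by rw [hw, sub_add_cancel]
          rw [this]
          exact Submodule.add_mem _ hwS (Submodule.smul_mem _ _ hfS)
      exact key v.support.max v rfl hv
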